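/- Let Y be an entrywise nonnegative M × N real matrix with positive integer row weights m_1, …, m_M. The support hypergraph of Y contains a simple cycle if and only if there exists an entrywise nonnegative M × N matrix Y' ≠ Y with the same support as Y (i.e., Y'_{ij} > 0 exactly when Y_{ij} > 0), the same row sums (Σ_j Y'_{ij} = Σ_j Y_{ij} for all i), and the same weighted column sums (Σ_i m_i Y'_{ij} = Σ_i m_i Y_{ij} for all j). -/

import Mathlib

/-- The support hypergraph of `Y` (vertex set `Fin N`, one edge `{j | 0 < Y i j}` for each
row `i` with at least two positive entries) contains a simple cycle.  Since every edge of
a simple cycle contains two distinct vertices, this is equivalent to the existence of the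
following data. -/
def SupportHasSimpleCycle {M N : ℕ} (Y : Fin M → Fin N → ℝ) : Prop :=
  ∃ ℓ : ℕ, 2 ≤ ℓ ∧ ∃ (v : Fin (ℓ + 1) → Fin N) (e : Fin ℓ → Fin M),
    v (Fin.last ℓ) = v 0 ∧
    (∀ k k' : Fin ℓ, v k.castSucc = v k'.castSucc → k = k') ∧
    Function.Injective e ∧
    ∀ k : Fin ℓ, 0 < Y (e k) (v k.castSucc) ∧ 0 < Y (e k) (v k.succ)

lemma cycle_forward {M N : ℕ} (m : Fin M → ℕ) (hm : ∀ i, 1 ≤ m i)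
    (Y : Fin M → Fin N → ℝ) (hY : ∀ i j, 0 ≤ Y i j)
    (h : SupportHasSimpleCycle Y) :
    ∃ Y' : Fin M → Fin N → ℝ, Y' ≠ Y ∧ (∀ i j, 0 ≤ Y' i j) ∧
        (∀ i j, 0 < Y' i j ↔ 0 < Y i j) ∧
        (∀ i, ∑ j, Y' i j = ∑ j, Y i j) ∧
        (∀ j, ∑ i, (m i : ℝ) * Y' i j = ∑ i, (m i : ℝ) * Y i j) := by
  obtain ⟨ℓ, hℓ, v, e, hclose, hvinj, heinj, hsupp⟩ := h
  haveI : NeZero ℓ := ⟨by omega⟩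
  have hmpos : ∀ i, (0:ℝ) < (m i : ℝ) := fun i => by exact_mod_cast (hm i)
  -- shift lemma
  have hshift : ∀ k : Fin ℓ, v k.succ = v (k+1).castSucc := by
    intro k
    by_cases hk : k.val + 1 < ℓ
    · congr 1
      apply Fin.ext
      simp [Fin.add_def, Fin.val_one', Nat.mod_eq_of_lt (show 1 < ℓ by omega),
        Nat.mod_eq_of_lt hk]
    · have hk' : k.val + 1 = ℓ := by omega
      have h1 : k.succ = Fin.last ℓ := by apply Fin.ext; simp [hk']
      have h2 : (k + 1 : Fin ℓ) = 0 := by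
        apply Fin.ext
        simp [Fin.add_def, Fin.val_one', Nat.mod_eq_of_lt (show 1 < ℓ by omega), hk']
      rw [h1, h2, hclose]
      rfl
  have hone : (1 : Fin ℓ) ≠ 0 := by
    intro hc
    have := congrArg Fin.val hc
    simp [Fin.val_one', Nat.mod_eq_of_lt (show 1 < ℓ by omega)] at this
  have hne : ∀ k : Fin ℓ, v k.castSucc ≠ v k.succ := by
    intro k hc
    rw [hshift k] at hc
    have h2 := hvinj _ _ hc
    have h3 : (0:Fin ℓ) = 1 := by
      have := congrArg (· - k) h2
      simpa using this
    exact hone h3.symm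
  -- the constant
  have hne' : (Finset.univ : Finset (Fin ℓ)).Nonempty := Finset.univ_nonempty
  set c : ℝ := ((Finset.univ : Finset (Fin ℓ)).inf' hne'
      (fun k => (m (e k) : ℝ) * Y (e k) (v k.succ))) / 2 with hc_def
  have hcpos : 0 < c := by
    apply div_pos _ (by norm_num)
    rw [Finset.lt_inf'_iff]
    intro k _
    exact mul_pos (hmpos _) (hsupp k).2
  have hcle : ∀ k : Fin ℓ, c * ((m (e k):ℝ))⁻¹ < Y (e k) (v k.succ) := by
    intro k
    have h1 : (Finset.univ : Finset (Fin ℓ)).inf' hne'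
        (fun k => (m (e k) : ℝ) * Y (e k) (v k.succ)) ≤ (m (e k) : ℝ) * Y (e k) (v k.succ) :=
      Finset.inf'_le _ (Finset.mem_univ k)
    have h2 : c < (m (e k) : ℝ) * Y (e k) (v k.succ) := by
      have := mul_pos (hmpos (e k)) (hsupp k).2
      rw [hc_def]
      linarith
    rw [mul_inv_lt_iff₀ (hmpos _)]
    calc c < (m (e k) : ℝ) * Y (e k) (v k.succ) := h2
    _ = Y (e k) (v k.succ) * (m (e k)) := by ring
  clear_value c
  clear hc_def
  -- perturbation
  set P : Fin M → Fin N → ℝ := fun i j =>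
    (∑ k : Fin ℓ, if e k = i then (if v k.castSucc = j then ((m i : ℝ))⁻¹ else 0) else 0)
    - (∑ k : Fin ℓ, if e k = i then (if v k.succ = j then ((m i : ℝ))⁻¹ else 0) else 0) with hP_def
  have hP1 : ∀ (k : Fin ℓ) (j : Fin N), P (e k) j =
      (if v k.castSucc = j then ((m (e k) : ℝ))⁻¹ else 0)
      - (if v k.succ = j then ((m (e k) : ℝ))⁻¹ else 0) := by
    intro k j
    rw [hP_def]
    dsimp only
    congr 1
    · rw [Finset.sum_eq_single_of_mem k (Finset.mem_univ k)]
      · simp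
      · intro k' _ hk'
        rw [if_neg (fun hc => hk' (heinj hc))]
    · rw [Finset.sum_eq_single_of_mem k (Finset.mem_univ k)]
      · simp
      · intro k' _ hk'
        rw [if_neg (fun hc => hk' (heinj hc))]
  have hP0 : ∀ i, (∀ k, e k ≠ i) → ∀ j, P i j = 0 := by
    intro i hi j
    rw [hP_def]
    dsimp only
    rw [Finset.sum_eq_zero (fun k _ => if_neg (hi k)),
      Finset.sum_eq_zero (fun k _ => if_neg (hi k))]
    ring
  -- pointwise characterization of Y' on/off the cycle
  have key : ∀ i j, (0 ≤ Y i j + c * P i j) ∧ (0 < Y i j + c * P i j ↔ 0 < Y i j) := by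
    intro i j
    by_cases hi : ∃ k, e k = i
    · obtain ⟨k, rfl⟩ := hi
      rw [hP1 k j]
      by_cases h1 : v k.castSucc = j
      · rw [if_pos h1, if_neg (fun hc => hne k (h1.trans hc.symm))]
        have hy : 0 < Y (e k) j := h1 ▸ (hsupp k).1
        have : 0 < c * ((m (e k) : ℝ))⁻¹ := mul_pos hcpos (inv_pos.2 (hmpos _))
        constructor
        · linarith
        · constructor <;> intro <;> linarith
      · rw [if_neg h1]
        by_cases h2 : v k.succ = j
        · rw [if_pos h2]
          have hy : c * ((m (e k):ℝ))⁻¹ < Y (e k) j := h2 ▸ hcle k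
          have hy2 : 0 < Y (e k) j := lt_trans (mul_pos hcpos (inv_pos.2 (hmpos _))) hy
          constructor
          · linarith
          · constructor <;> intro <;> linarith
        · rw [if_neg h2]
          norm_num [hY (e k) j]
    · push_neg at hi
      rw [hP0 i hi j]
      simp [hY i j]
  refine ⟨fun i j => Y i j + c * P i j, ?_, fun i j => (key i j).1, fun i j => (key i j).2, ?_, ?_⟩
  · -- Y' ≠ Y
    intro hc
    have h0 : v (0:Fin ℓ).succ ≠ v (0:Fin ℓ).castSucc := fun h => hne 0 h.symm
    have he := congrFun (congrFun hc (e 0)) (v (0:Fin ℓ).castSucc)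
    rw [hP1 0 (v (0:Fin ℓ).castSucc), if_pos rfl, if_neg h0] at he
    have : 0 < c * ((m (e 0) : ℝ))⁻¹ := mul_pos hcpos (inv_pos.2 (hmpos _))
    nlinarith [he]
  · -- row sums
    intro i
    have hrow : ∑ j, P i j = 0 := by
      have h1 : ∀ (w : Fin (ℓ+1)) (k : Fin ℓ),
          (∑ j, if e k = i then (if v w = j then ((m i : ℝ))⁻¹ else 0) else 0)
          = if e k = i then ((m i : ℝ))⁻¹ else 0 := by
        intro w k
        by_cases hk : e k = i
        · simp [hk]
        · simp [hk]
      calc ∑ j, P i j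
          = (∑ j, ∑ k : Fin ℓ, if e k = i then (if v k.castSucc = j then ((m i:ℝ))⁻¹ else 0) else 0)
            - (∑ j, ∑ k : Fin ℓ, if e k = i then (if v k.succ = j then ((m i:ℝ))⁻¹ else 0) else 0) := by
            rw [hP_def, Finset.sum_sub_distrib]
        _ = (∑ k : Fin ℓ, ∑ j, if e k = i then (if v k.castSucc = j then ((m i:ℝ))⁻¹ else 0) else 0)
            - (∑ k : Fin ℓ, ∑ j, if e k = i then (if v k.succ = j then ((m i:ℝ))⁻¹ else 0) else 0) := by
            congr 1 <;> exact Finset.sum_comm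
        _ = (∑ k : Fin ℓ, if e k = i then ((m i : ℝ))⁻¹ else 0)
            - (∑ k : Fin ℓ, if e k = i then ((m i : ℝ))⁻¹ else 0) := by
            rw [Finset.sum_congr rfl (fun k _ => h1 k.castSucc k),
              Finset.sum_congr rfl (fun k _ => h1 k.succ k)]
        _ = 0 := sub_self _
    rw [Finset.sum_add_distrib, ← Finset.mul_sum, hrow, mul_zero, add_zero]
  · -- column sums
    intro j
    have hcol : ∑ i, (m i : ℝ) * P i j = 0 := by
      rw [hP_def]
      dsimp only
      have expand : ∀ i, (m i : ℝ) *
          ((∑ k : Fin ℓ, if e k = i then (if v k.castSucc = j then ((m i : ℝ))⁻¹ else 0) else 0)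
          - (∑ k : Fin ℓ, if e k = i then (if v k.succ = j then ((m i : ℝ))⁻¹ else 0) else 0))
          = (∑ k : Fin ℓ, if e k = i then (if v k.castSucc = j then (1:ℝ) else 0) else 0)
          - (∑ k : Fin ℓ, if e k = i then (if v k.succ = j then (1:ℝ) else 0) else 0) := by
        intro i
        rw [mul_sub, Finset.mul_sum, Finset.mul_sum]
        congr 1 <;>
        · apply Finset.sum_congr rfl
          intro k _
          split_ifs with h1 h2
          · exact mul_inv_cancel₀ (ne_of_gt (hmpos i))
          · exact mul_zero _
          · exact mul_zero _
      rw [Finset.sum_congr rfl (fun i _ => expand i), Finset.sum_sub_distrib]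
      have swap : ∀ w : Fin ℓ → Fin (ℓ+1),
          (∑ i : Fin M, ∑ k : Fin ℓ, if e k = i then (if v (w k) = j then (1:ℝ) else 0) else 0)
          = ∑ k : Fin ℓ, ∑ i : Fin M, if e k = i then (if v (w k) = j then (1:ℝ) else 0) else 0 :=
        fun w => Finset.sum_comm
      rw [swap (fun k => k.castSucc), swap (fun k => k.succ)]
      have h2 : ∀ w : Fin ℓ → Fin (ℓ+1),
          (∑ k : Fin ℓ, ∑ i : Fin M, if e k = i then (if v (w k) = j then (1:ℝ) else 0) else 0)
          = ∑ k : Fin ℓ, (if v (w k) = j then (1:ℝ) else 0) := by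
        intro w
        apply Finset.sum_congr rfl
        intro k _
        rw [Finset.sum_eq_single_of_mem (e k) (Finset.mem_univ _)]
        · simp
        · intro i _ hi
          rw [if_neg (fun hc => hi hc.symm)]
      rw [h2 (fun k => k.castSucc), h2 (fun k => k.succ)]
      have h3 : (∑ k : Fin ℓ, if v k.succ = j then (1:ℝ) else 0)
          = ∑ k : Fin ℓ, if v k.castSucc = j then (1:ℝ) else 0 := by
        rw [← Equiv.sum_comp (Equiv.addRight (1 : Fin ℓ))
          (fun k => if v k.castSucc = j then (1:ℝ) else 0)]
        apply Finset.sum_congr rfl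
        intro k _
        simp only [Equiv.coe_addRight]
        rw [hshift k]
        rfl
      rw [h3, sub_self]
    calc ∑ i, (m i : ℝ) * (Y i j + c * P i j)
        = ∑ i, ((m i : ℝ) * Y i j + c * ((m i : ℝ) * P i j)) := by
          apply Finset.sum_congr rfl; intros; ring
      _ = (∑ i, (m i : ℝ) * Y i j) + c * ∑ i, (m i : ℝ) * P i j := by
          rw [Finset.sum_add_distrib, Finset.mul_sum]
      _ = ∑ i, (m i : ℝ) * Y i j := by rw [hcol, mul_zero, add_zero]

lemma cycle_backward {M N : ℕ} (m : Fin M → ℕ) (hm : ∀ i, 1 ≤ m i)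
    (Y : Fin M → Fin N → ℝ) (hY : ∀ i j, 0 ≤ Y i j)
    (Y' : Fin M → Fin N → ℝ) (hYne : Y' ≠ Y) (hY' : ∀ i j, 0 ≤ Y' i j)
    (hsupp : ∀ i j, 0 < Y' i j ↔ 0 < Y i j)
    (hrow : ∀ i, ∑ j, Y' i j = ∑ j, Y i j)
    (hcol : ∀ j, ∑ i, (m i : ℝ) * Y' i j = ∑ i, (m i : ℝ) * Y i j) :
    SupportHasSimpleCycle Y := by
  have hmpos : ∀ i, (0:ℝ) < (m i : ℝ) := fun i => by exact_mod_cast (hm i)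
  set D : Fin M → Fin N → ℝ := fun i j => Y' i j - Y i j with hD_def
  have hDrow : ∀ i, ∑ j, D i j = 0 := by
    intro i
    rw [hD_def]
    rw [Finset.sum_sub_distrib, hrow i, sub_self]
  have hDcol : ∀ j, ∑ i, (m i : ℝ) * D i j = 0 := by
    intro j
    rw [hD_def]
    have : ∀ i, (m i : ℝ) * (Y' i j - Y i j) = (m i : ℝ) * Y' i j - (m i : ℝ) * Y i j :=
      fun i => mul_sub _ _ _
    rw [Finset.sum_congr rfl (fun i _ => this i), Finset.sum_sub_distrib, hcol j, sub_self]
  have hDsupp : ∀ i j, D i j ≠ 0 → 0 < Y i j := by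
    intro i j hD
    by_contra hc
    have hy0 : Y i j = 0 := le_antisymm (not_lt.mp hc) (hY i j)
    have hy'0 : Y' i j = 0 := by
      have := (hsupp i j).not
      have h2 : ¬ 0 < Y' i j := by
        rw [hsupp i j, hy0]
        exact lt_irrefl 0
      exact le_antisymm (not_lt.mp h2) (hY' i j)
    apply hD
    rw [hD_def]
    simp [hy0, hy'0]
  have rowstep : ∀ i j, D i j < 0 → ∃ j', j' ≠ j ∧ 0 < D i j' := by
    intro i j hneg
    by_contra hc
    push_neg at hc
    have hsum : ∑ j', D i j' < 0 := by
      rw [← Finset.add_sum_erase _ _ (Finset.mem_univ j)]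
      have h2 : ∑ j' ∈ Finset.univ.erase j, D i j' ≤ 0 := by
        apply Finset.sum_nonpos
        intro j' hj'
        exact hc j' (Finset.mem_erase.mp hj').1
      linarith
    rw [hDrow i] at hsum
    exact lt_irrefl 0 hsum
  have rowstep' : ∀ i j, 0 < D i j → ∃ j', D i j' < 0 := by
    intro i j hpos
    by_contra hc
    push_neg at hc
    have hsum : 0 < ∑ j', D i j' := by
      rw [← Finset.add_sum_erase _ _ (Finset.mem_univ j)]
      have h2 : 0 ≤ ∑ j' ∈ Finset.univ.erase j, D i j' :=
        Finset.sum_nonneg (fun j' _ => hc j')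
      linarith
    rw [hDrow i] at hsum
    exact lt_irrefl 0 hsum
  have colstep : ∀ i j, 0 < D i j → ∃ i', i' ≠ i ∧ D i' j < 0 := by
    intro i j hpos
    by_contra hc
    push_neg at hc
    have hsum : 0 < ∑ i', (m i' : ℝ) * D i' j := by
      rw [← Finset.add_sum_erase _ _ (Finset.mem_univ i)]
      have h2 : 0 ≤ ∑ i' ∈ Finset.univ.erase i, (m i' : ℝ) * D i' j := by
        apply Finset.sum_nonneg
        intro i' hi'
        exact mul_nonneg (le_of_lt (hmpos i')) (hc i' (Finset.mem_erase.mp hi').1)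
      have h3 : 0 < (m i : ℝ) * D i j := mul_pos (hmpos i) hpos
      linarith
    rw [hDcol j] at hsum
    exact lt_irrefl 0 hsum
  have init : ∃ i j, D i j < 0 := by
    have hne0 : ∃ i j, D i j ≠ 0 := by
      by_contra hc
      push_neg at hc
      apply hYne
      funext i j
      have := hc i j
      rw [hD_def] at this
      simpa [sub_eq_zero] using this
    obtain ⟨i, j, hij⟩ := hne0
    rcases lt_or_gt_of_ne hij with h | h
    · exact ⟨i, j, h⟩
    · obtain ⟨j', hj'⟩ := rowstep' i j h
      exact ⟨i, j', hj'⟩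
  obtain ⟨i₀, j₀, h₀⟩ := init
  -- the infinite walk
  have hstep : ∀ s : {p : Fin M × Fin N // D p.1 p.2 < 0},
      ∃ t : {p : Fin M × Fin N // D p.1 p.2 < 0}, t.1.2 ≠ s.1.2 ∧ 0 < D s.1.1 t.1.2 := by
    rintro ⟨⟨i, j⟩, hs⟩
    obtain ⟨j', hj', hpos⟩ := rowstep i j hs
    obtain ⟨i', _, hneg⟩ := colstep i j' hpos
    exact ⟨⟨(i', j'), hneg⟩, hj', hpos⟩
  let f : ℕ → {p : Fin M × Fin N // D p.1 p.2 < 0} :=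
    fun n => Nat.rec ⟨(i₀, j₀), h₀⟩ (fun _ s => (hstep s).choose) n
  have hf : ∀ t, (f (t+1)).1.2 ≠ (f t).1.2 ∧ 0 < D (f t).1.1 (f (t+1)).1.2 :=
    fun t => (hstep (f t)).choose_spec
  have hfneg : ∀ t, D (f t).1.1 (f t).1.2 < 0 := fun t => (f t).2
  -- pigeonhole
  have hpig : ∃ s t : ℕ, s < t ∧ (f s).1.2 = (f t).1.2 := by
    have hcard : Fintype.card (Fin N) < Fintype.card (Fin (N+1)) := by simp
    obtain ⟨a, b, hab, heq⟩ :=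
      Fintype.exists_ne_map_eq_of_card_lt (fun t : Fin (N+1) => (f t.val).1.2) hcard
    rcases lt_or_gt_of_ne (fun hc : a.val = b.val => hab (Fin.ext hc)) with h | h
    · exact ⟨a.val, b.val, h, heq⟩
    · exact ⟨b.val, a.val, h, heq.symm⟩
  -- good walks
  set W : ℕ → Prop := fun ℓ => 1 ≤ ℓ ∧ ∃ (vv : ℕ → Fin N) (ee : ℕ → Fin M), vv ℓ = vv 0 ∧
      ∀ k < ℓ, D (ee k) (vv k) < 0 ∧ 0 < D (ee k) (vv (k+1)) with hW_def
  have hW : ∃ ℓ, W ℓ := by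
    obtain ⟨s, t, hst, heq⟩ := hpig
    refine ⟨t - s, by omega, fun k => (f (s + k)).1.2, fun k => (f (s + k)).1.1, ?_, ?_⟩
    · have h1 : s + (t - s) = t := by omega
      dsimp only
      rw [h1, Nat.add_zero]
      exact heq.symm
    · intro k hk
      dsimp only
      refine ⟨hfneg (s + k), ?_⟩
      have h2 : s + (k + 1) = (s + k) + 1 := by omega
      rw [h2]
      exact (hf (s + k)).2
  classical
  set ℓ₀ := Nat.find hW with hℓ₀_def
  obtain ⟨hℓ1, vv, ee, hcl, hcond⟩ := Nat.find_spec hW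
  rw [← hℓ₀_def] at hℓ1 hcl hcond
  have hmin : ∀ ℓ' < ℓ₀, ¬ W ℓ' := fun ℓ' h => Nat.find_min hW h
  have hℓ2 : 2 ≤ ℓ₀ := by
    rcases Nat.lt_or_ge ℓ₀ 2 with h | h
    · exfalso
      have h1 : ℓ₀ = 1 := by omega
      have h2 := hcond 0 (by omega)
      rw [h1] at hcl
      rw [hcl] at h2
      exact absurd h2.2 (not_lt.mpr (le_of_lt h2.1))
    · exact h
  -- vertex distinctness
  have vdist : ∀ s t, s < t → t < ℓ₀ → vv s ≠ vv t := by
    intro s t hst ht hveq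
    apply hmin (t - s) (by omega)
    refine ⟨by omega, fun k => vv (k + s), fun k => ee (k + s), ?_, ?_⟩
    · show vv (t - s + s) = vv (0 + s)
      have h1 : t - s + s = t := by omega
      rw [h1, Nat.zero_add]
      exact hveq.symm
    · intro k hk
      dsimp only
      have h2 : k + 1 + s = (k + s) + 1 := by omega
      rw [h2]
      exact hcond (k + s) (by omega)
  -- edge distinctness
  have edist : ∀ a b, a < b → b < ℓ₀ → ee a ≠ ee b := by
    intro a b hab hb heeq
    apply hmin (ℓ₀ - (b - a)) (by omega)
    refine ⟨by omega, fun k => if k ≤ a then vv k else vv (k + (b - a)),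
      fun k => if k ≤ a then ee k else ee (k + (b - a)), ?_, ?_⟩
    · dsimp only
      rw [if_neg (by omega : ¬ (ℓ₀ - (b - a) ≤ a)), if_pos (Nat.zero_le a)]
      have h3 : ℓ₀ - (b - a) + (b - a) = ℓ₀ := by omega
      rw [h3]
      exact hcl
    · intro k hk
      dsimp only
      rcases lt_trichotomy k a with h | h | h
      · rw [if_pos (by omega), if_pos (by omega), if_pos (by omega)]
        exact hcond k (by omega)
      · subst h
        rw [if_pos (le_refl k), if_pos (le_refl k), if_neg (by omega : ¬ (k + 1 ≤ k))]
        have h4 : k + 1 + (b - k) = b + 1 := by omega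
        rw [h4]
        refine ⟨(hcond k (by omega)).1, ?_⟩
        rw [heeq]
        exact (hcond b hb).2
      · rw [if_neg (by omega : ¬ (k ≤ a)), if_neg (by omega : ¬ (k ≤ a)),
          if_neg (by omega : ¬ (k + 1 ≤ a))]
        have h5 : k + 1 + (b - a) = (k + (b - a)) + 1 := by omega
        rw [h5]
        exact hcond (k + (b - a)) (by omega)
  -- assemble
  refine ⟨ℓ₀, hℓ2, fun k => vv k.val, fun k => ee k.val, ?_, ?_, ?_, ?_⟩
  · simpa using hcl
  · intro k k' h
    simp only [Fin.coe_castSucc] at h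
    rcases lt_trichotomy k.val k'.val with hlt | heq | hgt
    · exact absurd h (vdist _ _ hlt k'.isLt)
    · exact Fin.ext heq
    · exact absurd h.symm (vdist _ _ hgt k.isLt)
  · intro k k' h
    rcases lt_trichotomy k.val k'.val with hlt | heq | hgt
    · exact absurd h (edist _ _ hlt k'.isLt)
    · exact Fin.ext heq
    · exact absurd h.symm (edist _ _ hgt k.isLt)
  · intro k
    constructor
    · have := (hcond k.val k.isLt).1
      have hne0 : D (ee k.val) (vv k.val) ≠ 0 := ne_of_lt this
      simpa using hDsupp _ _ hne0
    · have := (hcond k.val k.isLt).2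
      have hne0 : D (ee k.val) (vv (k.val + 1)) ≠ 0 := ne_of_gt this
      simpa using hDsupp _ _ hne0

/-- The support hypergraph of an entrywise nonnegative matrix `Y` with positive row
weights `m` contains a simple cycle iff `Y` is not uniquely determined by its support,
row sums and weighted column sums. -/
theorem supportHasSimpleCycle_iff {M N : ℕ} (m : Fin M → ℕ) (hm : ∀ i, 1 ≤ m i)
    (Y : Fin M → Fin N → ℝ) (hY : ∀ i j, 0 ≤ Y i j) :
    SupportHasSimpleCycle Y ↔
      ∃ Y' : Fin M → Fin N → ℝ, Y' ≠ Y ∧ (∀ i j, 0 ≤ Y' i j) ∧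
        (∀ i j, 0 < Y' i j ↔ 0 < Y i j) ∧
        (∀ i, ∑ j, Y' i j = ∑ j, Y i j) ∧
        (∀ j, ∑ i, (m i : ℝ) * Y' i j = ∑ i, (m i : ℝ) * Y i j) := by
  constructor
  · exact cycle_forward m hm Y hY
  · rintro ⟨Y', hYne, hY', hsupp, hrow, hcol⟩
    exact cycle_backward m hm Y hY Y' hYne hY' hsupp hrow hcol
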